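/- For all real t with 0 < t ≤ 1/2, one has arcsin(t) - t ≤ 4(π/3 - 1) · t³. -/

import Mathlib

open Real Set

private lemma sqrt_facts {x : ℝ} (hx0 : 0 ≤ x) (hx1 : x ≤ 1/2) :
    0 < Real.sqrt (1 - x^2) ∧ Real.sqrt (1 - x^2) ≤ 1 ∧
      (Real.sqrt (1 - x^2))^2 = 1 - x^2 := by
  exact ⟨Real.sqrt_pos.2 (by nlinarith), Real.sqrt_le_one.2 (by nlinarith),
    Real.sq_sqrt (by nlinarith)⟩

/-- derivative of √(1-x²) -/
private lemma hasDeriv_u {x : ℝ} (h : (1 : ℝ) - x^2 ≠ 0) :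
    HasDerivAt (fun y : ℝ => Real.sqrt (1 - y^2))
      (1 / (2 * Real.sqrt (1 - x^2)) * (-(2 * x^1))) x := by
  have hinner : HasDerivAt (fun y : ℝ => 1 - y^2) (-(2 * x^1)) x :=
    (hasDerivAt_pow 2 x).const_sub 1
  exact (Real.hasDerivAt_sqrt h).comp x hinner

/-- Key Shafer-type inequality: `3 arcsin x ≤ x (2 + 1/√(1-x²))` on `[0, 1/2]`. -/
private lemma keyA {x : ℝ} (hx0 : 0 ≤ x) (hx1 : x ≤ 1/2) :
    3 * Real.arcsin x ≤ x * (2 + (Real.sqrt (1 - x^2))⁻¹) := by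
  set F : ℝ → ℝ := fun y => y * (2 + (Real.sqrt (1 - y^2))⁻¹) - 3 * Real.arcsin y with hF
  have key : MonotoneOn F (Set.Icc 0 (1/2)) := by
    apply monotoneOn_of_deriv_nonneg (convex_Icc 0 (1/2))
    · apply ContinuousOn.sub
      · apply ContinuousOn.mul continuousOn_id
        apply ContinuousOn.add continuousOn_const
        apply ContinuousOn.inv₀
        · exact (Real.continuous_sqrt.comp (by continuity)).continuousOn
        · intro y hy
          exact ne_of_gt (sqrt_facts hy.1 hy.2).1
      · exact (continuous_const.mul Real.continuous_arcsin).continuousOn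
    all_goals rw [interior_Icc]
    · intro y hy
      obtain ⟨hupos, hu1, husq⟩ := sqrt_facts hy.1.le hy.2.le
      set u := Real.sqrt (1 - y^2)
      have hu : HasDerivAt (fun z : ℝ => (Real.sqrt (1 - z^2))⁻¹)
          (-(1 / (2 * u) * (-(2 * y^1))) / u^2) y :=
        (hasDeriv_u (by nlinarith)).inv (ne_of_gt hupos)
      have hmul : HasDerivAt (fun z : ℝ => z * (2 + (Real.sqrt (1 - z^2))⁻¹))
          (1 * (2 + u⁻¹) + y * (-(1 / (2 * u) * (-(2 * y^1))) / u^2)) y :=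
        (hasDerivAt_id y).mul (hu.const_add 2)
      have harc : HasDerivAt (fun z : ℝ => 3 * Real.arcsin z) (3 * (1 / Real.sqrt (1 - y^2))) y :=
        (Real.hasDerivAt_arcsin (by nlinarith [hy.1]) (by nlinarith [hy.2])).const_mul 3
      exact (hmul.sub harc).differentiableAt.differentiableWithinAt
    · intro y hy
      obtain ⟨hupos, hu1, husq⟩ := sqrt_facts hy.1.le hy.2.le
      set u := Real.sqrt (1 - y^2) with hudef
      have hy2 : y^2 = 1 - u^2 := by linarith
      have hu : HasDerivAt (fun z : ℝ => (Real.sqrt (1 - z^2))⁻¹)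
          (-(1 / (2 * u) * (-(2 * y^1))) / u^2) y :=
        (hasDeriv_u (by nlinarith)).inv (ne_of_gt hupos)
      have hmul : HasDerivAt (fun z : ℝ => z * (2 + (Real.sqrt (1 - z^2))⁻¹))
          (1 * (2 + u⁻¹) + y * (-(1 / (2 * u) * (-(2 * y^1))) / u^2)) y :=
        (hasDerivAt_id y).mul (hu.const_add 2)
      have harc : HasDerivAt (fun z : ℝ => 3 * Real.arcsin z) (3 * (1 / u)) y :=
        (Real.hasDerivAt_arcsin (by nlinarith [hy.1]) (by nlinarith [hy.2])).const_mul 3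
      rw [(show HasDerivAt F (1 * (2 + u⁻¹) + y * (-(1 / (2 * u) * (-(2 * y^1))) / u^2) - 3 * (1 / u)) y from hmul.sub harc).deriv]
      have hid : 1 * (2 + u⁻¹) + y * (-(1 / (2 * u) * (-(2 * y^1))) / u^2) - 3 * (1 / u)
          = 2 - 2/u + y^2/u^3 := by
        field_simp
        ring
      rw [hid, hy2]
      have hid2 : 2 - 2/u + (1 - u^2)/u^3 = (1-u)^2 * (2*u+1) / u^3 := by
        field_simp
        ring
      rw [hid2]
      positivity
  have h0 : F 0 = 0 := by simp [hF]
  have hle := key (Set.mem_Icc.2 ⟨le_refl 0, by norm_num⟩) (Set.mem_Icc.2 ⟨hx0, hx1⟩) hx0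
  rw [h0] at hle
  simp only [hF] at hle
  linarith

private lemma gmono : MonotoneOn (fun t : ℝ => (Real.arcsin t - t) / t^3) (Set.Ioc 0 (1/2)) := by
  apply monotoneOn_of_deriv_nonneg (convex_Ioc 0 (1/2))
  · apply ContinuousOn.div
    · exact (Real.continuous_arcsin.sub continuous_id).continuousOn
    · exact (continuous_pow 3).continuousOn
    · intro y hy; exact pow_ne_zero 3 (ne_of_gt hy.1)
  all_goals rw [interior_Ioc]
  · intro y hy
    have hnum : HasDerivAt (fun z : ℝ => Real.arcsin z - z) (1 / Real.sqrt (1 - y^2) - 1) y :=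
      (Real.hasDerivAt_arcsin (by nlinarith [hy.1]) (by nlinarith [hy.2])).sub (hasDerivAt_id y)
    exact ((hnum.div (hasDerivAt_pow 3 y) (pow_ne_zero 3 (ne_of_gt hy.1))).differentiableAt).differentiableWithinAt
  · intro y hy
    obtain ⟨hupos, hu1, husq⟩ := sqrt_facts hy.1.le hy.2.le
    set u := Real.sqrt (1 - y^2) with hudef
    have hnum : HasDerivAt (fun z : ℝ => Real.arcsin z - z) (1 / u - 1) y :=
      (Real.hasDerivAt_arcsin (by nlinarith [hy.1]) (by nlinarith [hy.2])).sub (hasDerivAt_id y)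
    have hdiv : HasDerivAt (fun z : ℝ => (Real.arcsin z - z) / z^3)
        (((1 / u - 1) * y^3 - (Real.arcsin y - y) * (3 * y^(3-1))) / (y^3)^2) y :=
      hnum.div (hasDerivAt_pow 3 y) (pow_ne_zero 3 (ne_of_gt hy.1))
    rw [hdiv.deriv]
    apply div_nonneg _ (by positivity)
    have hA := keyA hy.1.le hy.2.le
    have hstep : 0 ≤ y * (1/u - 1) - 3 * (Real.arcsin y - y) := by
      rw [one_div]
      nlinarith [hA]
    have hnumeq : (1 / u - 1) * y^3 - (Real.arcsin y - y) * (3 * y^(3-1))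
        = y^2 * (y * (1/u - 1) - 3 * (Real.arcsin y - y)) := by ring
    rw [hnumeq]
    exact mul_nonneg (sq_nonneg y) hstep

private lemma arcsin_half : Real.arcsin (1/2 : ℝ) = Real.pi / 6 := by
  rw [show (1/2 : ℝ) = Real.sin (Real.pi / 6) from Real.sin_pi_div_six.symm]
  apply Real.arcsin_sin
  · linarith [Real.pi_pos]
  · linarith [Real.pi_pos]

theorem arcsin_sub_le_four_pi_div_three_sub_one (t : ℝ) (ht0 : 0 < t) (ht1 : t ≤ 1/2) :
    Real.arcsin t - t ≤ 4 * (Real.pi / 3 - 1) * t ^ 3 := by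
  have hmem : t ∈ Set.Ioc (0:ℝ) (1/2) := ⟨ht0, ht1⟩
  have hhalf : (1/2 : ℝ) ∈ Set.Ioc (0:ℝ) (1/2) := by
    constructor <;> norm_num
  have h := gmono hmem hhalf ht1
  simp only [arcsin_half] at h
  have hval : (Real.pi/6 - 1/2) / (1/2:ℝ)^3 = 4 * (Real.pi / 3 - 1) := by ring
  have h2 : (Real.arcsin t - t) / t^3 ≤ 4 * (Real.pi / 3 - 1) := by
    rw [← hval]; exact h
  calc Real.arcsin t - t = (Real.arcsin t - t) / t^3 * t^3 := by
        rw [div_mul_cancel₀ _ (pow_ne_zero 3 ht0.ne')]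
    _ ≤ 4 * (Real.pi / 3 - 1) * t^3 :=
        mul_le_mul_of_nonneg_right h2 (pow_nonneg ht0.le 3)
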